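/- For positive integers x, y, z, the matrix M₁ = A^{z-1}·V·B^{y-1}·T·V·B^{x-1}·T equals [[1−y, −x−y+xy],[1+z−yz, 1−x−xz−yz+xyz]], where A = [[1,0],[1,1]], B = [[1,1],[0,1]], V = [[1,0],[1,-1]], T = [[-1,1],[0,1]]. -/

import Mathlib

lemma Apow (n : ℕ) : (!![1, 0; 1, 1] : Matrix (Fin 2) (Fin 2) ℤ) ^ n = !![1, 0; (n : ℤ), 1] := by
  induction n with
  | zero => simp [Matrix.one_fin_two]
  | succ k ih =>
    rw [pow_succ, ih]
    simp [Matrix.mul_fin_two]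
    try ring_nf

lemma Bpow (n : ℕ) : (!![1, 1; 0, 1] : Matrix (Fin 2) (Fin 2) ℤ) ^ n = !![1, (n : ℤ); 0, 1] := by
  induction n with
  | zero => simp [Matrix.one_fin_two]
  | succ k ih =>
    rw [pow_succ, ih]
    simp [Matrix.mul_fin_two]
    try ring_nf

theorem M1_formula (x y z : ℕ) (hx : 0 < x) (hy : 0 < y) (hz : 0 < z) :
    let A : Matrix (Fin 2) (Fin 2) ℤ := !![1, 0; 1, 1]
    let B : Matrix (Fin 2) (Fin 2) ℤ := !![1, 1; 0, 1]
    let V : Matrix (Fin 2) (Fin 2) ℤ := !![1, 0; 1, -1]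
    let T : Matrix (Fin 2) (Fin 2) ℤ := !![-1, 1; 0, 1]
    A ^ (z - 1) * V * B ^ (y - 1) * T * V * B ^ (x - 1) * T =
      !![1 - (y : ℤ), -(x : ℤ) - y + x * y;
         1 + (z : ℤ) - y * z, 1 - (x : ℤ) - x * z - y * z + x * y * z] := by
  intro A B V T
  obtain ⟨a, rfl⟩ := Nat.exists_eq_add_of_lt hx
  obtain ⟨b, rfl⟩ := Nat.exists_eq_add_of_lt hy
  obtain ⟨c, rfl⟩ := Nat.exists_eq_add_of_lt hz
  simp only [A, B, V, T, Nat.add_sub_cancel, Apow, Bpow, Matrix.mul_fin_two]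
  push_cast
  norm_num
  refine ⟨?_, ?_, ?_⟩ <;> ring
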